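/- For every integer N ≥ 1 and every periodic grid function u one has the summation-by-parts identity (u, D₊³D₋²u)_h = −(Δx/2) ‖D₋D₊²u‖_h². -/

import Mathlib

/-- Forward difference operator `(D₊u)_i = (u_{i+1} − u_i)/h`. -/
noncomputable def Dp (h : ℝ) (u : ℤ → ℝ) : ℤ → ℝ := fun i => (u (i + 1) - u i) / h

/-- Backward difference operator `(D₋u)_i = (u_i − u_{i−1})/h`. -/
noncomputable def Dm (h : ℝ) (u : ℤ → ℝ) : ℤ → ℝ := fun i => (u i - u (i - 1)) / h

/-- Central difference operator `(D₀u)_i = (u_{i+1} − u_{i−1})/(2h)`. -/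
noncomputable def D0 (h : ℝ) (u : ℤ → ℝ) : ℤ → ℝ := fun i => (u (i + 1) - u (i - 1)) / (2 * h)

/-- Discrete inner product `(f,g)_h = h Σ_{i=1}^N f_i g_i`. -/
noncomputable def iph (N : ℕ) (h : ℝ) (f g : ℤ → ℝ) : ℝ :=
  h * ∑ i ∈ Finset.Icc (1 : ℤ) (N : ℤ), f i * g i

/-- Discrete squared norm `‖f‖_h² = h Σ_{i=1}^N f_i²`. -/
noncomputable def nh2 (N : ℕ) (h : ℝ) (f : ℤ → ℝ) : ℝ :=
  h * ∑ i ∈ Finset.Icc (1 : ℤ) (N : ℤ), (f i) ^ 2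

/-- Discrete norm `‖f‖_h`. -/
noncomputable def normh (N : ℕ) (h : ℝ) (f : ℤ → ℝ) : ℝ := Real.sqrt (nh2 N h f)

/-- A periodic grid function with period `N`: `u_{i+N} = u_i` for all `i`. -/
def PeriodicGrid (N : ℕ) (u : ℤ → ℝ) : Prop := ∀ i : ℤ, u (i + N) = u i

/-- Summation-by-parts identity for the discrete Kawahara term (used in the proof of
Theorem 2.4): for every `N ≥ 1` and every periodic grid function `u`,
`(u, D₊³D₋²u)_h = −(Δx/2) ‖D₋D₊²u‖_h²` with `Δx = 1/N`. -/
lemma sum_Icc_one' (N : ℕ) (f : ℤ → ℝ) :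
    ∑ i ∈ Finset.Icc (1 : ℤ) (N : ℤ), f i = ∑ n ∈ Finset.range N, f (1 + n) := by
  induction N with
  | zero => simp
  | succ n ih =>
    have hins : Finset.Icc (1:ℤ) ((n:ℕ)+1 : ℕ) = insert ((n:ℤ)+1) (Finset.Icc 1 (n:ℤ)) := by
      ext x
      simp only [Finset.mem_Icc, Finset.mem_insert]
      push_cast
      omega
    rw [hins, Finset.sum_insert (by simp), Finset.sum_range_succ, ih]
    push_cast
    ring_nf

lemma telescope_periodic' (N : ℕ) (g : ℤ → ℝ) (hg : g (1 + N) = g 1) :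
    ∑ i ∈ Finset.Icc (1 : ℤ) (N : ℤ), (g (i + 1) - g i) = 0 := by
  rw [sum_Icc_one']
  have h1 : ∑ n ∈ Finset.range N, (g (1 + (n:ℤ) + 1) - g (1 + (n:ℤ)))
      = (fun m : ℕ => g (1 + (m:ℤ))) N - (fun m : ℕ => g (1 + (m:ℤ))) 0 := by
    rw [← Finset.sum_range_sub (fun m : ℕ => g (1 + (m:ℤ))) N]
    apply Finset.sum_congr rfl
    intro n _
    push_cast
    ring_nf
  rw [h1]
  simp [hg]

theorem summation_by_parts_kawahara (N : ℕ) (hN : 1 ≤ N) (Δx : ℝ) (hΔx : Δx = 1 / N)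
    (u : ℤ → ℝ) (hu : PeriodicGrid N u) :
    iph N Δx u (Dp Δx (Dp Δx (Dp Δx (Dm Δx (Dm Δx u)))))
      = -(Δx / 2) * nh2 N Δx (Dm Δx (Dp Δx (Dp Δx u))) := by
  have hNpos : (0:ℝ) < N := by exact_mod_cast Nat.pos_of_ne_zero (by omega)
  have hx : Δx ≠ 0 := by rw [hΔx]; positivity
  set T1 : ℝ := ∑ i ∈ Finset.Icc (1:ℤ) (N:ℤ),
      u i * (u (i+3) - 5*u (i+2) + 10*u (i+1) - 10*u i + 5*u (i-1) - u (i-2)) with hT1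
  set T2 : ℝ := ∑ i ∈ Finset.Icc (1:ℤ) (N:ℤ),
      (u (i+2) - 3*u (i+1) + 3*u i - u (i-1))^2 with hT2
  have n1 : ∀ j:ℤ, j+1-1 = j := fun j => by ring
  have n2 : ∀ j:ℤ, j+1+1 = j+2 := fun j => by ring
  have n3 : ∀ j:ℤ, j+2+1 = j+3 := fun j => by ring
  have n4 : ∀ j:ℤ, j+2-1 = j+1 := fun j => by ring
  have n5 : ∀ j:ℤ, j+3-1 = j+2 := fun j => by ring
  have n6 : ∀ j:ℤ, j-1-1 = j-2 := fun j => by ring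
  have key : 2 * T1 + T2 = 0 := by
    set g : ℤ → ℝ := fun i => 2*u (i-1)*u (i+2) - 4*u (i-1)*u (i+1) + 2*u (i-2)*u i
      - 6*u i*u (i+1) - 4*u (i-1)*u i + u (i+1)^2 + 10*u i^2 - u (i-1)^2 with hgdef
    have hg : g (1 + N) = g 1 := by
      simp only [hgdef]
      rw [show (1:ℤ)+(N:ℤ)-1 = 0+(N:ℤ) by ring, show (1:ℤ)+(N:ℤ)+2 = 3+(N:ℤ) by ring,
          show (1:ℤ)+(N:ℤ)+1 = 2+(N:ℤ) by ring, show (1:ℤ)+(N:ℤ)-2 = (-1)+(N:ℤ) by ring,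
          hu 0, hu 3, hu 2, hu (-1), hu 1]
      norm_num
    have step : ∀ i ∈ Finset.Icc (1:ℤ) (N:ℤ),
        2 * (u i * (u (i+3) - 5*u (i+2) + 10*u (i+1) - 10*u i + 5*u (i-1) - u (i-2)))
          + (u (i+2) - 3*u (i+1) + 3*u i - u (i-1))^2 = g (i+1) - g i := by
      intro i _
      simp only [hgdef]
      rw [show i+1-1 = i by ring, show i+1+2 = i+3 by ring, show i+1+1 = i+2 by ring,
          show i+1-2 = i-1 by ring]
      ring
    calc 2 * T1 + T2
        = ∑ i ∈ Finset.Icc (1:ℤ) (N:ℤ),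
            (2 * (u i * (u (i+3) - 5*u (i+2) + 10*u (i+1) - 10*u i + 5*u (i-1) - u (i-2)))
              + (u (i+2) - 3*u (i+1) + 3*u i - u (i-1))^2) := by
          rw [hT1, hT2, Finset.mul_sum, ← Finset.sum_add_distrib]
      _ = ∑ i ∈ Finset.Icc (1:ℤ) (N:ℤ), (g (i+1) - g i) := Finset.sum_congr rfl step
      _ = 0 := telescope_periodic' N g hg
  have e1 : ∑ i ∈ Finset.Icc (1:ℤ) (N:ℤ),
      u i * (Dp Δx (Dp Δx (Dp Δx (Dm Δx (Dm Δx u)))) i) = T1 / Δx^5 := by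
    rw [hT1, Finset.sum_div]
    apply Finset.sum_congr rfl
    intro i _
    simp only [Dp, Dm, n1, n2, n3, n4, n5, n6]
    field_simp
    ring
  have e2 : ∑ i ∈ Finset.Icc (1:ℤ) (N:ℤ),
      (Dm Δx (Dp Δx (Dp Δx u)) i)^2 = T2 / Δx^6 := by
    rw [hT2, Finset.sum_div]
    apply Finset.sum_congr rfl
    intro i _
    simp only [Dp, Dm, n1, n2, n3, n4, n5, n6]
    field_simp
    ring
  have hT1eq : T1 = -T2/2 := by linarith
  simp only [iph, nh2]
  rw [e1, e2, hT1eq]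
  field_simp
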